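/- If ε/n ≤ 1 - 1/q, then the cardinality of a Hamming ball of radius ε in Z_q^n is at most q^{n·h_q(ε/n)}, where h_q is the q-ary entropy function. -/

import Mathlib

open Finset

/-- The q-ary entropy function (base-q logarithms), with h_q(0) = h_q(1) = 0 by the
`Real.logb` convention `logb q 0 = 0`. -/
noncomputable def qEntropy (q : ℕ) (x : ℝ) : ℝ :=
  x * Real.logb q (q - 1) - x * Real.logb q x - (1 - x) * Real.logb q (1 - x)

/-- If ε/n ≤ 1 - 1/q, then the Hamming ball of radius ε in Z_q^n has
cardinality at most q^{n·h_q(ε/n)}. -/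
theorem hamming_ball_card_le_entropy_bound (q n ε : ℕ) (hq : 2 ≤ q) (hn : 1 ≤ n)
    (hε : (ε : ℝ) / n ≤ 1 - 1 / q) :
    ((∑ i ∈ Finset.range (ε + 1), n.choose i * (q - 1) ^ i : ℕ) : ℝ) ≤
      (q : ℝ) ^ ((n : ℝ) * qEntropy q ((ε : ℝ) / n)) := by
  have hq0 : (0:ℝ) < q := by positivity
  have hq1 : (1:ℝ) < q := by exact_mod_cast hq
  have hn0 : (0:ℝ) < n := by exact_mod_cast hn
  rcases Nat.eq_zero_or_pos ε with h0 | hε1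
  · subst h0
    simp [qEntropy]
  set p : ℝ := (ε:ℝ)/n with hp
  have hp0 : 0 < p := by positivity
  have hp1 : p < 1 := lt_of_le_of_lt hε (by
    have : (0:ℝ) < 1/q := by positivity
    linarith)
  have hεn : ε < n := by
    have : (ε:ℝ) < n := by
      have := (div_lt_one hn0).mp hp1
      exact this
    exact_mod_cast this
  have hq1' : (0:ℝ) < (q:ℝ) - 1 := by linarith
  have h1p : 0 < 1 - p := by linarith
  have hnp : (n:ℝ) * p = ε := by rw [hp]; field_simp
  have hn1p : (n:ℝ) * (1 - p) = ((n - ε : ℕ):ℝ) := by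
    rw [Nat.cast_sub hεn.le]
    rw [mul_sub, mul_one, hnp]
  have hkey : p ≤ ((q:ℝ)-1)*(1-p) := by
    have hqp : (q:ℝ)*p ≤ (q:ℝ) - 1 := by
      have h := mul_le_mul_of_nonneg_left hε hq0.le
      have he : (q:ℝ)*(1-1/q) = (q:ℝ) - 1 := by field_simp
      linarith [he ▸ h]
    nlinarith [hqp]
  have hrhs : (q:ℝ) ^ ((n:ℝ) * qEntropy q p)
      = ((q:ℝ)-1)^ε / p^ε / (1-p)^(n-ε) := by
    have e1 : (n:ℝ) * qEntropy q p
        = Real.logb q ((q:ℝ)-1) * (ε:ℝ) - Real.logb q p * (ε:ℝ)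
          - Real.logb q (1-p) * ((n-ε:ℕ):ℝ) := by
      unfold qEntropy
      rw [← hnp, ← hn1p]; push_cast; ring
    rw [e1, Real.rpow_sub hq0, Real.rpow_sub hq0,
      Real.rpow_mul hq0.le, Real.rpow_mul hq0.le, Real.rpow_mul hq0.le,
      Real.rpow_logb hq0 (ne_of_gt hq1) hq1',
      Real.rpow_logb hq0 (ne_of_gt hq1) hp0,
      Real.rpow_logb hq0 (ne_of_gt hq1) h1p,
      Real.rpow_natCast, Real.rpow_natCast, Real.rpow_natCast]
  rw [hrhs, div_div, le_div_iff₀ (by positivity)]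
  push_cast [Nat.cast_sub (by omega : 1 ≤ q)]
  rw [Finset.sum_mul]
  calc ∑ i ∈ Finset.range (ε+1), (n.choose i : ℝ) * ((q:ℝ)-1)^i * (p^ε * (1-p)^(n-ε))
      ≤ ∑ i ∈ Finset.range (ε+1), ((q:ℝ)-1)^ε * ((n.choose i : ℝ) * p^i * (1-p)^(n-i)) := by
        apply Finset.sum_le_sum
        intro i hi
        have hiε : i ≤ ε := by
          simp only [Finset.mem_range] at hi; omega
        have e2 : p^ε = p^i * p^(ε-i) := by
          rw [← pow_add]; congr 1; omega
        have e3 : ((q:ℝ)-1)^ε = ((q:ℝ)-1)^i * ((q:ℝ)-1)^(ε-i) := by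
          rw [← pow_add]; congr 1; omega
        have e4 : (1-p)^(n-i) = (1-p)^(n-ε) * (1-p)^(ε-i) := by
          rw [← pow_add]; congr 1; omega
        have hineq : p^(ε-i) ≤ (((q:ℝ)-1)*(1-p))^(ε-i) :=
          pow_le_pow_left₀ hp0.le hkey _
        rw [e2, e3, e4]
        have hcn : (0:ℝ) ≤ (n.choose i : ℝ) := by positivity
        calc (n.choose i : ℝ) * ((q:ℝ)-1)^i * (p^i * p^(ε-i) * (1-p)^(n-ε))
            ≤ (n.choose i : ℝ) * ((q:ℝ)-1)^i *
              (p^i * (((q:ℝ)-1)*(1-p))^(ε-i) * (1-p)^(n-ε)) := by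
              apply mul_le_mul_of_nonneg_left _ (by positivity)
              apply mul_le_mul_of_nonneg_right _ (by positivity)
              exact mul_le_mul_of_nonneg_left hineq (by positivity)
          _ = ((q:ℝ)-1)^i * ((q:ℝ)-1)^(ε-i) *
              ((n.choose i : ℝ) * p^i * ((1-p)^(n-ε) * (1-p)^(ε-i))) := by
              rw [mul_pow]; ring
    _ = ((q:ℝ)-1)^ε * ∑ i ∈ Finset.range (ε+1), ((n.choose i : ℝ) * p^i * (1-p)^(n-i)) := by
        rw [Finset.mul_sum]
    _ ≤ ((q:ℝ)-1)^ε * ∑ i ∈ Finset.range (n+1), ((n.choose i : ℝ) * p^i * (1-p)^(n-i)) := by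
        apply mul_le_mul_of_nonneg_left _ (by positivity)
        apply Finset.sum_le_sum_of_subset_of_nonneg
        · exact Finset.range_subset_range.mpr (by omega)
        · intro i _ _; positivity
    _ = ((q:ℝ)-1)^ε := by
        have := add_pow p (1-p) n
        have h2 : ∑ i ∈ Finset.range (n+1), ((n.choose i : ℝ) * p^i * (1-p)^(n-i)) = 1 := by
          have h1 : (p + (1-p))^n = ∑ k ∈ Finset.range (n+1),
              p^k * (1-p)^(n-k) * (n.choose k : ℝ) := add_pow p (1-p) n
          simp only [add_sub_cancel, one_pow] at h1
          have h3 : ∑ i ∈ Finset.range (n+1), ((n.choose i : ℝ) * p^i * (1-p)^(n-i))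
              = ∑ i ∈ Finset.range (n+1), p^i * (1-p)^(n-i) * (n.choose i : ℝ) := by
            apply Finset.sum_congr rfl; intros; ring
          rw [h3, ← h1]
        rw [h2, mul_one]
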